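/- arXiv:2305.03818 — 2 statements merged into one kernel-verified Lean document; each statement's English description precedes it below -/
import Mathlib

section
/- Let 1 ≤ ℓ ≤ k and m ≥ 1 be integers, let μ_1, …, μ_m be masses on ℝ^d, and let H_1, …, H_k be hyperplanes in ℝ^d. For g ∈ {0,1}^k let R_g = ⋂_{i=1}^k H_i^{g_i}, where H_i^0 = H_i^+ and H_i^1 = H_i^-. Then the following are equivalent: (1) any ℓ of the k hyperplanes equipartition each μ_i; (2) for every i ∈ {1,…,m} and every h ∈ {0,1}^k with 1 ≤ h_1 + ⋯ + h_k ≤ ℓ, one has Σ_{g ∈ {0,1}^k} μ_i(R_g)·(−1)^{h_1 g_1 + ⋯ + h_k g_k} = 0. -/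
open MeasureTheory RealInnerProductSpace

noncomputable section

/-- The closed half-space determined by the hyperplane `{x | ⟪a, x⟫ = b}`:
`true` corresponds to `H⁺ = {x | ⟪a, x⟫ ≥ b}`, `false` to `H⁻ = {x | ⟪a, x⟫ ≤ b}`. -/
def halfSpace {d : ℕ} (a : EuclideanSpace ℝ (Fin d)) (b : ℝ) (ε : Bool) :
    Set (EuclideanSpace ℝ (Fin d)) :=
  if ε then {x | b ≤ ⟪a, x⟫} else {x | ⟪a, x⟫ ≤ b}

/-- The region `⋂ i ∈ s, H i ^ (ε i)` determined by the hyperplanes indexed by `s`. -/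
def region {d k : ℕ} (a : Fin k → EuclideanSpace ℝ (Fin d)) (b : Fin k → ℝ)
    (s : Finset (Fin k)) (ε : Fin k → Bool) : Set (EuclideanSpace ℝ (Fin d)) :=
  ⋂ i ∈ s, halfSpace (a i) (b i) (ε i)

/-- The region `R_g = ⋂ i, H_i^{g i}`, where `g i = false` selects `H_i⁺` and
`g i = true` selects `H_i⁻` (so `0 ↔ H⁺` and `1 ↔ H⁻`). -/
def fullRegion {d k : ℕ} (a : Fin k → EuclideanSpace ℝ (Fin d)) (b : Fin k → ℝ)
    (g : Fin k → Bool) : Set (EuclideanSpace ℝ (Fin d)) :=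
  ⋂ i, halfSpace (a i) (b i) (!g i)

section Aux

lemma hyper_null {d : ℕ} {a : EuclideanSpace ℝ (Fin d)} (ha : a ≠ 0) (b : ℝ) :
    volume {x : EuclideanSpace ℝ (Fin d) | ⟪a, x⟫ = b} = 0 := by
  have haa : ⟪a, a⟫ ≠ (0:ℝ) := inner_self_ne_zero.mpr ha
  set x0 : EuclideanSpace ℝ (Fin d) := (b / ⟪a, a⟫) • a with hx0def
  have hx0 : ⟪a, x0⟫ = b := by
    rw [hx0def, real_inner_smul_right, div_mul_cancel₀ _ haa]
  have hker : LinearMap.ker ((innerSL ℝ a) : EuclideanSpace ℝ (Fin d) →L[ℝ] ℝ).toLinearMap ≠ ⊤ := by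
    intro h
    have : ⟪a, a⟫ = (0:ℝ) := by
      have := LinearMap.mem_ker.mp (h ▸ Submodule.mem_top : a ∈ _)
      simpa using this
    exact haa this
  have h0 : volume {y : EuclideanSpace ℝ (Fin d) | ⟪a, y⟫ = 0} = 0 := by
    have := Measure.addHaar_submodule (volume : Measure (EuclideanSpace ℝ (Fin d)))
      (LinearMap.ker ((innerSL ℝ a) : EuclideanSpace ℝ (Fin d) →L[ℝ] ℝ).toLinearMap) hker
    have hset : {y : EuclideanSpace ℝ (Fin d) | ⟪a, y⟫ = 0}
        = (LinearMap.ker ((innerSL ℝ a) : EuclideanSpace ℝ (Fin d) →L[ℝ] ℝ).toLinearMap : Set _) := by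
      ext y; simp [LinearMap.mem_ker]
    rw [hset]; exact this
  have key : (fun y => x0 + y) ⁻¹' {x : EuclideanSpace ℝ (Fin d) | ⟪a, x⟫ = b}
      = {y : EuclideanSpace ℝ (Fin d) | ⟪a, y⟫ = 0} := by
    ext y
    simp only [Set.mem_preimage, Set.mem_setOf_eq, inner_add_right, hx0]
    constructor <;> intro h <;> linarith
  calc volume {x : EuclideanSpace ℝ (Fin d) | ⟪a, x⟫ = b}
      = volume ((fun y => x0 + y) ⁻¹' {x : EuclideanSpace ℝ (Fin d) | ⟪a, x⟫ = b}) :=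
        (measure_preimage_add _ _ _).symm
    _ = 0 := by rw [key]; exact h0

variable {d k : ℕ} {a : Fin k → EuclideanSpace ℝ (Fin d)} {b : Fin k → ℝ}

lemma measurable_halfSpace (a0 : EuclideanSpace ℝ (Fin d)) (b0 : ℝ) (ε : Bool) :
    MeasurableSet (halfSpace a0 b0 ε) := by
  have hc : Continuous fun x : EuclideanSpace ℝ (Fin d) => ⟪a0, x⟫ :=
    (innerSL ℝ a0).continuous
  cases ε <;> simp only [halfSpace, if_true, if_false, Bool.false_eq_true] <;>
    [exact measurableSet_le hc.measurable measurable_const;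
     exact measurableSet_le measurable_const hc.measurable]

lemma measurable_fullRegion (g : Fin k → Bool) : MeasurableSet (fullRegion a b g) :=
  MeasurableSet.iInter fun _ => measurable_halfSpace _ _ _

lemma mem_halfSpace_true {a0 : EuclideanSpace ℝ (Fin d)} {b0 : ℝ} {x} :
    x ∈ halfSpace a0 b0 true ↔ b0 ≤ ⟪a0, x⟫ := by simp [halfSpace]

lemma mem_halfSpace_false {a0 : EuclideanSpace ℝ (Fin d)} {b0 : ℝ} {x} :
    x ∈ halfSpace a0 b0 false ↔ ⟪a0, x⟫ ≤ b0 := by simp [halfSpace]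

lemma region_eq_iUnion (s : Finset (Fin k)) (ε : Fin k → Bool) :
    region a b s ε = ⋃ g ∈ Finset.univ.filter (fun g : Fin k → Bool => ∀ i ∈ s, g i = !ε i),
      fullRegion a b g := by
  ext x
  simp only [Set.mem_iUnion, Finset.mem_filter, Finset.mem_univ, true_and]
  constructor
  · intro hx
    refine ⟨fun i => if i ∈ s then !ε i else decide (⟪a i, x⟫ < b i), fun i hi => by simp [hi], ?_⟩
    refine Set.mem_iInter.mpr fun i => ?_
    by_cases hi : i ∈ s
    · simp only [hi, if_true, Bool.not_not]
      exact Set.mem_iInter₂.mp hx i hi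
    · simp only [if_neg hi]
      by_cases hlt : ⟪a i, x⟫ < b i
      · rw [decide_eq_true hlt, Bool.not_true]
        exact mem_halfSpace_false.mpr hlt.le
      · rw [decide_eq_false hlt, Bool.not_false]
        exact mem_halfSpace_true.mpr (not_lt.mp hlt)
  · rintro ⟨g, hg, hx⟩
    refine Set.mem_iInter₂.mpr fun i hi => ?_
    have := Set.mem_iInter.mp hx i
    rwa [hg i hi, Bool.not_not] at this

lemma measure_region (μ : Measure (EuclideanSpace ℝ (Fin d))) (hac : μ ≪ volume)
    (ha : ∀ i, a i ≠ 0) (s : Finset (Fin k)) (ε : Fin k → Bool) :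
    μ (region a b s ε)
      = ∑ g : Fin k → Bool, if ∀ i ∈ s, g i = !ε i then μ (fullRegion a b g) else 0 := by
  classical
  have hd : Set.Pairwise
      ↑(Finset.univ.filter (fun g : Fin k → Bool => ∀ i ∈ s, g i = !ε i))
      (Function.onFun (AEDisjoint μ) (fullRegion a b)) := by
    intro g _ g' _ hne
    obtain ⟨i, hi⟩ : ∃ i, g i ≠ g' i := Function.ne_iff.mp hne
    have hsub : fullRegion a b g ∩ fullRegion a b g' ⊆ {x | ⟪a i, x⟫ = b i} := by
      rintro x ⟨hx, hx'⟩
      have h1 := Set.mem_iInter.mp hx i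
      have h2 := Set.mem_iInter.mp hx' i
      cases hgi : g i <;> cases hgi' : g' i
      · exact absurd (hgi.trans hgi'.symm) hi
      · rw [hgi, Bool.not_false] at h1; rw [hgi', Bool.not_true] at h2
        exact le_antisymm (mem_halfSpace_false.mp h2) (mem_halfSpace_true.mp h1)
      · rw [hgi, Bool.not_true] at h1; rw [hgi', Bool.not_false] at h2
        exact le_antisymm (mem_halfSpace_false.mp h1) (mem_halfSpace_true.mp h2)
      · exact absurd (hgi.trans hgi'.symm) hi
    exact measure_mono_null hsub (hac (hyper_null (ha i) (b i)))
  rw [region_eq_iUnion,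
    measure_biUnion_finset₀ hd (fun g _ => (measurable_fullRegion g).nullMeasurableSet),
    Finset.sum_filter]

lemma iteForall_eq_prod (s : Finset (Fin k)) (p : Fin k → Prop) [DecidablePred p] :
    (if ∀ i ∈ s, p i then (1:ℝ) else 0) = ∏ i ∈ s, if p i then (1:ℝ) else 0 := by
  by_cases h : ∀ i ∈ s, p i
  · rw [if_pos h, Finset.prod_congr rfl fun i hi => if_pos (h i hi), Finset.prod_const_one]
  · push_neg at h
    obtain ⟨i, hi, hpi⟩ := h
    rw [if_neg (by push_neg; exact ⟨i, hi, hpi⟩)]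
    exact (Finset.prod_eq_zero hi (show (if p i then (1:ℝ) else 0) = 0 from if_neg hpi)).symm

lemma master (w : Fin k → Bool → ℝ) (s : Finset (Fin k)) :
    ∑ ε : Fin k → Bool, ∏ i ∈ s, w i (ε i)
      = 2 ^ (k - s.card) * ∏ i ∈ s, (w i false + w i true) := by
  classical
  have h1 : ∀ ε : Fin k → Bool, (∏ i ∈ s, w i (ε i))
      = ∏ i, (if i ∈ s then w i (ε i) else 1) := by
    intro ε
    rw [Finset.prod_ite_mem, Finset.univ_inter]
  simp_rw [h1]
  rw [← Fintype.prod_sum (fun i (x : Bool) => if i ∈ s then w i x else 1)]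
  have h2 : ∀ i : Fin k, (∑ x : Bool, if i ∈ s then w i x else 1)
      = if i ∈ s then w i false + w i true else 2 := by
    intro i
    by_cases hi : i ∈ s <;> simp [hi, Fintype.sum_bool, add_comm]
  simp_rw [h2]
  rw [Finset.prod_ite (fun i => w i false + w i true) (fun _ => (2:ℝ)),
    Finset.prod_const, Finset.filter_mem_eq_inter, Finset.univ_inter, Finset.filter_not,
    Finset.filter_mem_eq_inter, Finset.univ_inter, Finset.card_sdiff_of_subset (Finset.subset_univ s),
    Finset.card_univ, Fintype.card_fin, mul_comm]

lemma chi_eq_prod (h g : Fin k → Bool) :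
    (-1 : ℝ) ^ (∑ i, if h i ∧ g i then 1 else 0 : ℕ)
      = ∏ i ∈ Finset.univ.filter (fun i => h i = true), (if g i then (-1:ℝ) else 1) := by
  rw [← Finset.prod_pow_eq_pow_sum, Finset.prod_filter]
  refine Finset.prod_congr rfl fun i _ => ?_
  by_cases hh : h i <;> by_cases hg : g i <;> simp [hh, hg]

end Aux

theorem stmt_13 (d m ℓ k : ℕ) (hℓ1 : 1 ≤ ℓ) (hℓk : ℓ ≤ k) (hm : 1 ≤ m)
    (μ : Fin m → Measure (EuclideanSpace ℝ (Fin d)))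
    (hfin : ∀ r, IsFiniteMeasure (μ r))
    (hac : ∀ r, μ r ≪ volume)
    (a : Fin k → EuclideanSpace ℝ (Fin d)) (b : Fin k → ℝ)
    (ha : ∀ i, a i ≠ 0) :
    -- (1) any ℓ of the k hyperplanes equipartition each μ r
    (∀ r : Fin m, ∀ s : Finset (Fin k), s.card = ℓ → ∀ ε : Fin k → Bool,
        μ r (region a b s ε) = μ r Set.univ / 2 ^ ℓ)
    ↔
    -- (2) the corresponding Fourier coefficients vanish
    (∀ r : Fin m, ∀ h : Fin k → Bool,
        1 ≤ (∑ i, if h i then 1 else 0 : ℕ) →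
        (∑ i, if h i then 1 else 0 : ℕ) ≤ ℓ →
        ∑ g : Fin k → Bool,
          (μ r (fullRegion a b g)).toReal *
            (-1 : ℝ) ^ (∑ i, if h i ∧ g i then 1 else 0 : ℕ) = 0) := by
  classical
  -- toReal version of the decomposition of regions into full regions
  have key : ∀ r : Fin m, ∀ (s : Finset (Fin k)) (ε : Fin k → Bool),
      (μ r (region a b s ε)).toReal
        = ∑ g : Fin k → Bool,
            if ∀ i ∈ s, g i = !ε i then (μ r (fullRegion a b g)).toReal else 0 := by
    intro r s ε
    haveI := hfin r
    rw [measure_region (μ r) (hac r) ha s ε,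
      ENNReal.toReal_sum (fun g _ => by split <;> [exact measure_ne_top _ _; simp])]
    exact Finset.sum_congr rfl fun g _ => by split <;> simp
  have total : ∀ r : Fin m,
      ∑ g : Fin k → Bool, (μ r (fullRegion a b g)).toReal = (μ r Set.univ).toReal := by
    intro r
    have h0 : region a b (∅ : Finset (Fin k)) (fun _ => false) = Set.univ := by
      simp [region]
    have hk := key r ∅ (fun _ => false)
    rw [h0] at hk
    rw [hk]
    exact Finset.sum_congr rfl fun g _ =>
      (if_pos (fun i hi => absurd hi (Finset.notMem_empty i))).symm
  constructor
  · -- (1) → (2)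
    intro H r h h1 h2
    haveI := hfin r
    set T : ℝ := (μ r Set.univ).toReal with hT
    set t : Finset (Fin k) := Finset.univ.filter (fun i => h i = true) with htdef
    have htcard : t.card = ∑ i, if h i then 1 else 0 := Finset.card_filter _ _
    have ht2 : t.card ≤ ℓ := htcard ▸ h2
    have htne : t.Nonempty := Finset.card_pos.mp (lt_of_lt_of_le Nat.zero_lt_one (htcard ▸ h1))
    obtain ⟨s, hts, -, hscard⟩ := Finset.exists_subsuperset_card_eq (Finset.subset_univ t) ht2
      (by rw [Finset.card_univ, Fintype.card_fin]; exact hℓk)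
    -- rewrite the goal using chi_eq_prod
    have hgoal : (∑ g : Fin k → Bool,
        (μ r (fullRegion a b g)).toReal * (-1 : ℝ) ^ (∑ i, if h i ∧ g i then 1 else 0 : ℕ))
        = ∑ g : Fin k → Bool,
            (μ r (fullRegion a b g)).toReal * ∏ i ∈ t, (if g i then (-1:ℝ) else 1) :=
      Finset.sum_congr rfl fun g _ => by rw [chi_eq_prod]
    rw [hgoal]
    -- per g, counting compatible ε's
    have count : ∀ g : Fin k → Bool,
        (∑ ε : Fin k → Bool, if ∀ i ∈ s, g i = !ε i then (1:ℝ) else 0) = 2 ^ (k - ℓ) := by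
      intro g
      calc (∑ ε : Fin k → Bool, if ∀ i ∈ s, g i = !ε i then (1:ℝ) else 0)
          = ∑ ε : Fin k → Bool, ∏ i ∈ s, (if g i = !ε i then (1:ℝ) else 0) :=
            Finset.sum_congr rfl fun ε _ => iteForall_eq_prod s _
        _ = 2 ^ (k - s.card) * ∏ i ∈ s,
              ((if g i = !false then (1:ℝ) else 0) + (if g i = !true then (1:ℝ) else 0)) :=
            master (fun i x => if g i = !x then (1:ℝ) else 0) s
        _ = 2 ^ (k - ℓ) := by
            rw [hscard, Finset.prod_congr rfl
              (fun i _ => show ((if g i = !false then (1:ℝ) else 0)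
                  + (if g i = !true then (1:ℝ) else 0)) = 1 by cases hgi : g i <;> simp [hgi]),
              Finset.prod_const_one, mul_one]
    have key2 : (2:ℝ) ^ (k - ℓ) * (∑ g : Fin k → Bool,
        (μ r (fullRegion a b g)).toReal * ∏ i ∈ t, (if g i then (-1:ℝ) else 1)) = 0 := by
      calc (2:ℝ) ^ (k - ℓ) * ∑ g : Fin k → Bool,
            (μ r (fullRegion a b g)).toReal * ∏ i ∈ t, (if g i then (-1:ℝ) else 1)
          = ∑ g : Fin k → Bool, ∑ ε : Fin k → Bool,
              (if ∀ i ∈ s, g i = !ε i then (1:ℝ) else 0) *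
                ((μ r (fullRegion a b g)).toReal * ∏ i ∈ t, (if g i then (-1:ℝ) else 1)) := by
            rw [Finset.mul_sum]
            exact Finset.sum_congr rfl fun g _ => by rw [← Finset.sum_mul, count g]
        _ = ∑ ε : Fin k → Bool, ∑ g : Fin k → Bool,
              (if ∀ i ∈ s, g i = !ε i then (1:ℝ) else 0) *
                ((μ r (fullRegion a b g)).toReal * ∏ i ∈ t, (if g i then (-1:ℝ) else 1)) :=
            Finset.sum_comm
        _ = ∑ ε : Fin k → Bool, (∏ i ∈ t, (if !ε i then (-1:ℝ) else 1)) *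
              ∑ g : Fin k → Bool,
                (if ∀ i ∈ s, g i = !ε i then (μ r (fullRegion a b g)).toReal else 0) := by
            refine Finset.sum_congr rfl fun ε _ => ?_
            rw [Finset.mul_sum]
            refine Finset.sum_congr rfl fun g _ => ?_
            by_cases hc : ∀ i ∈ s, g i = !ε i
            · rw [if_pos hc, if_pos hc, one_mul]
              have hprod : (∏ i ∈ t, (if g i then (-1:ℝ) else 1))
                  = ∏ i ∈ t, (if !ε i then (-1:ℝ) else 1) :=
                Finset.prod_congr rfl fun i hi => by rw [hc i (hts hi)]
              rw [hprod]; ring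
            · rw [if_neg hc, if_neg hc, zero_mul, mul_zero]
        _ = ∑ ε : Fin k → Bool,
              (∏ i ∈ t, (if !ε i then (-1:ℝ) else 1)) * (T / 2 ^ ℓ) := by
            refine Finset.sum_congr rfl fun ε _ => ?_
            congr 1
            rw [← key r s ε, H r s hscard ε, ENNReal.toReal_div, ENNReal.toReal_pow,
              ENNReal.toReal_ofNat, hT]
        _ = (∑ ε : Fin k → Bool, ∏ i ∈ t, (if !ε i then (-1:ℝ) else 1)) * (T / 2 ^ ℓ) :=
            (Finset.sum_mul _ _ _).symm
        _ = 0 := by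
            rw [master (fun _ x => if !x then (-1:ℝ) else 1) t]
            obtain ⟨i0, hi0⟩ := htne
            rw [Finset.prod_eq_zero hi0 (by norm_num), mul_zero, zero_mul]
    have h2pow : (2:ℝ) ^ (k - ℓ) ≠ 0 := by positivity
    exact (mul_eq_zero.mp key2).resolve_left h2pow
  · -- (2) → (1)
    intro H r s hscard ε
    haveI := hfin r
    set T : ℝ := (μ r Set.univ).toReal with hT
    -- vanishing of all Fourier coefficients supported in nonempty subsets of s
    have hvanish : ∀ t ∈ s.powerset, t ≠ ∅ →
        (∑ g : Fin k → Bool,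
          (μ r (fullRegion a b g)).toReal * ∏ i ∈ t, (if g i then (-1:ℝ) else 1)) = 0 := by
      intro t hts htne
      have hsub : t ⊆ s := Finset.mem_powerset.mp hts
      have hfilter : Finset.univ.filter (fun i => (decide (i ∈ t)) = true) = t := by
        ext i; simp
      have hcard : (∑ i, if (decide (i ∈ t) : Bool) then 1 else 0 : ℕ) = t.card := by
        rw [← Finset.card_filter, hfilter]
      have h1 : 1 ≤ (∑ i, if (decide (i ∈ t) : Bool) then 1 else 0 : ℕ) := by
        rw [hcard]
        exact Finset.card_pos.mpr (Finset.nonempty_of_ne_empty htne)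
      have h2 : (∑ i, if (decide (i ∈ t) : Bool) then 1 else 0 : ℕ) ≤ ℓ := by
        rw [hcard, ← hscard]
        exact Finset.card_le_card hsub
      have := H r (fun i => decide (i ∈ t)) h1 h2
      rw [← this]
      refine Finset.sum_congr rfl fun g _ => ?_
      rw [chi_eq_prod, hfilter]
    -- the main computation
    have main : (2:ℝ) ^ ℓ * (μ r (region a b s ε)).toReal = T := by
      rw [key r s ε, Finset.mul_sum]
      have step : ∀ g : Fin k → Bool,
          (2:ℝ) ^ ℓ * (if ∀ i ∈ s, g i = !ε i then (μ r (fullRegion a b g)).toReal else 0)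
            = ∑ t ∈ s.powerset, ((μ r (fullRegion a b g)).toReal *
                ((∏ i ∈ t, (if g i then (-1:ℝ) else 1)) *
                  (∏ i ∈ t, (if !ε i then (-1:ℝ) else 1)))) := by
        intro g
        have hite : (if ∀ i ∈ s, g i = !ε i then (μ r (fullRegion a b g)).toReal else 0)
            = (μ r (fullRegion a b g)).toReal * (if ∀ i ∈ s, g i = !ε i then (1:ℝ) else 0) := by
          split <;> ring
        rw [hite, iteForall_eq_prod s (fun i => g i = !ε i)]
        have hfactor : ∀ i ∈ s, (2:ℝ) * (if g i = !ε i then (1:ℝ) else 0)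
            = (if g i then (-1:ℝ) else 1) * (if !ε i then (-1:ℝ) else 1) + 1 := by
          intro i _
          cases hgi : g i <;> cases hei : ε i <;> simp [hgi, hei] <;> norm_num
        calc (2:ℝ) ^ ℓ * ((μ r (fullRegion a b g)).toReal *
                ∏ i ∈ s, (if g i = !ε i then (1:ℝ) else 0))
            = (μ r (fullRegion a b g)).toReal *
                ∏ i ∈ s, ((2:ℝ) * (if g i = !ε i then (1:ℝ) else 0)) := by
              rw [Finset.prod_mul_distrib, Finset.prod_const, hscard]; ring
          _ = (μ r (fullRegion a b g)).toReal *
                ∏ i ∈ s, ((if g i then (-1:ℝ) else 1) * (if !ε i then (-1:ℝ) else 1) + 1) :=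
              by rw [Finset.prod_congr rfl hfactor]
          _ = (μ r (fullRegion a b g)).toReal * ∑ t ∈ s.powerset,
                (∏ i ∈ t, ((if g i then (-1:ℝ) else 1) * (if !ε i then (-1:ℝ) else 1))) *
                  ∏ i ∈ s \ t, (1:ℝ) := by
              rw [Finset.prod_add]
          _ = ∑ t ∈ s.powerset, ((μ r (fullRegion a b g)).toReal *
                ((∏ i ∈ t, (if g i then (-1:ℝ) else 1)) *
                  (∏ i ∈ t, (if !ε i then (-1:ℝ) else 1)))) := by
              rw [Finset.mul_sum]
              exact Finset.sum_congr rfl fun t _ => by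
                rw [Finset.prod_const_one, mul_one, Finset.prod_mul_distrib]
      rw [Finset.sum_congr rfl fun g _ => step g, Finset.sum_comm]
      have term : ∀ t ∈ s.powerset,
          (∑ g : Fin k → Bool, (μ r (fullRegion a b g)).toReal *
            ((∏ i ∈ t, (if g i then (-1:ℝ) else 1)) *
              (∏ i ∈ t, (if !ε i then (-1:ℝ) else 1))))
          = (if t = ∅ then T else 0) := by
        intro t hts
        by_cases hte : t = ∅
        · subst hte
          simp only [Finset.prod_empty, mul_one, if_pos]
          exact total r
        · rw [if_neg hte]
          have : ∀ g : Fin k → Bool, (μ r (fullRegion a b g)).toReal *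
              ((∏ i ∈ t, (if g i then (-1:ℝ) else 1)) *
                (∏ i ∈ t, (if !ε i then (-1:ℝ) else 1)))
              = ((μ r (fullRegion a b g)).toReal *
                  (∏ i ∈ t, (if g i then (-1:ℝ) else 1))) *
                (∏ i ∈ t, (if !ε i then (-1:ℝ) else 1)) := fun g => by ring
          rw [Finset.sum_congr rfl fun g _ => this g, ← Finset.sum_mul,
            hvanish t hts hte, zero_mul]
      rw [Finset.sum_congr rfl term, Finset.sum_ite_eq' s.powerset (∅ : Finset (Fin k)) (fun _ => T)]
      rw [if_pos (Finset.mem_powerset.mpr (Finset.empty_subset s))]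
    -- conclude in ℝ≥0∞
    have hne1 : μ r (region a b s ε) ≠ ⊤ := measure_ne_top _ _
    have hne2 : μ r Set.univ / 2 ^ ℓ ≠ ⊤ := by
      exact (ENNReal.div_lt_top (measure_ne_top _ _) (pow_ne_zero ℓ (by norm_num))).ne
    rw [← ENNReal.toReal_eq_toReal_iff' hne1 hne2, ENNReal.toReal_div, ENNReal.toReal_pow,
      ENNReal.toReal_ofNat, ← hT]
    have h2pow : (2:ℝ) ^ ℓ ≠ 0 := by positivity
    field_simp
    linarith [main]
end
end

section
/- In the polynomial ring (ZMod 2)[t_1, t_2, t_3, t_4], the polynomial p_{3,4} satisfies p_{3,4} = Σ_{σ ∈ S_4} t_{σ(1)}^5 t_{σ(2)}^4 t_{σ(3)}^3 t_{σ(4)}^2 + Σ_{σ ∈ S_4} t_{σ(1)}^7 t_{σ(2)}^4 t_{σ(3)}^2 t_{σ(4)} + Σ_{σ ∈ S_4} t_{σ(1)}^6 t_{σ(2)}^5 t_{σ(3)}^2 t_{σ(4)} + Σ_{σ ∈ S_4} t_{σ(1)}^6 t_{σ(2)}^4 t_{σ(3)}^3 t_{σ(4)}, where the sums range over all permutations σ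 of {1,2,3,4}. -/
open MvPolynomial

set_option maxHeartbeats 4000000

noncomputable section

/-- The polynomial `p_{ℓ,k} = ∏ (a₁ t₁ + ⋯ + a_k t_k)` over all `a ∈ {0,1}^k` with
`1 ≤ a₁ + ⋯ + a_k ≤ ℓ`, i.e. the product of the linear forms `∑_{i ∈ S} t_i` over all
nonempty subsets `S ⊆ {1, …, k}` with `|S| ≤ ℓ`. -/
def pPoly (k ℓ : ℕ) : MvPolynomial (Fin k) (ZMod 2) :=
  ∏ S ∈ Finset.univ.filter (fun S : Finset (Fin k) => S.Nonempty ∧ S.card ≤ ℓ),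
    ∑ i ∈ S, X i

lemma perm_sum {M : Type*} [AddCommMonoid M] (f : Fin 4 → Fin 4 → Fin 4 → Fin 4 → M) :
    ∑ σ : Equiv.Perm (Fin 4), f (σ 0) (σ 1) (σ 2) (σ 3)
      = ∑ v ∈ Finset.univ.filter (fun v : Fin 4 → Fin 4 => Function.Bijective v),
          f (v 0) (v 1) (v 2) (v 3) := by
  refine Finset.sum_bij (fun σ _ => (σ : Fin 4 → Fin 4)) ?_ ?_ ?_ ?_
  · intro σ _
    simp only [Finset.mem_filter]
    exact ⟨Finset.mem_univ _, σ.bijective⟩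
  · intro a _ b _ h
    exact Equiv.coe_fn_injective h
  · intro v hv
    exact ⟨Equiv.ofBijective v (by simpa using hv), Finset.mem_univ _, rfl⟩
  · intro σ _
    rfl

lemma bij_finset : (Finset.univ.filter (fun v : Fin 4 → Fin 4 => Function.Bijective v))
    = ({![0, 1, 2, 3], ![0, 1, 3, 2], ![0, 2, 1, 3], ![0, 2, 3, 1], ![0, 3, 1, 2], ![0, 3, 2, 1], ![1, 0, 2, 3], ![1, 0, 3, 2], ![1, 2, 0, 3], ![1, 2, 3, 0], ![1, 3, 0, 2], ![1, 3, 2, 0], ![2, 0, 1, 3], ![2, 0, 3, 1], ![2, 1, 0, 3], ![2, 1, 3, 0], ![2, 3, 0, 1], ![2, 3, 1, 0], ![3, 0, 1, 2], ![3, 0, 2, 1], ![3, 1, 0, 2], ![3, 1, 2, 0], ![3, 2, 0, 1], ![3, 2, 1, 0]} : Finset (Fin 4 → Fin 4)) := by decide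

theorem stmt_14 :
    pPoly 4 3 =
      (∑ σ : Equiv.Perm (Fin 4),
        X (σ 0) ^ 5 * X (σ 1) ^ 4 * X (σ 2) ^ 3 * X (σ 3) ^ 2) +
      (∑ σ : Equiv.Perm (Fin 4),
        X (σ 0) ^ 7 * X (σ 1) ^ 4 * X (σ 2) ^ 2 * X (σ 3)) +
      (∑ σ : Equiv.Perm (Fin 4),
        X (σ 0) ^ 6 * X (σ 1) ^ 5 * X (σ 2) ^ 2 * X (σ 3)) +
      (∑ σ : Equiv.Perm (Fin 4),
        X (σ 0) ^ 6 * X (σ 1) ^ 4 * X (σ 2) ^ 3 * X (σ 3)) := by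
  have hfil : (Finset.univ.filter (fun S : Finset (Fin 4) => S.Nonempty ∧ S.card ≤ 3))
      = ({{0}, {1}, {2}, {3}, {0, 1}, {0, 2}, {0, 3}, {1, 2}, {1, 3}, {2, 3}, {0, 1, 2}, {0, 1, 3}, {0, 2, 3}, {1, 2, 3}} : Finset (Finset (Fin 4))) := by decide
  have hprod : pPoly 4 3 = (X 0) * (X 1) * (X 2) * (X 3) * (X 0 + X 1) * (X 0 + X 2) * (X 0 + X 3) * (X 1 + X 2) * (X 1 + X 3) * (X 2 + X 3) * (X 0 + X 1 + X 2) * (X 0 + X 1 + X 3) * (X 0 + X 2 + X 3) * (X 1 + X 2 + X 3) := by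
    rw [pPoly, hfil]
    simp (config := { decide := true }) [Finset.prod_insert, Finset.sum_insert,
      Finset.prod_singleton, Finset.sum_singleton]
    ring
  have h2 : (2 : MvPolynomial (Fin 4) (ZMod 2)) = 0 := CharTwo.two_eq_zero
  rw [hprod,
    perm_sum (fun a b c d => X a ^ 5 * X b ^ 4 * X c ^ 3 * X d ^ 2),
    perm_sum (fun a b c d => X a ^ 7 * X b ^ 4 * X c ^ 2 * X d),
    perm_sum (fun a b c d => X a ^ 6 * X b ^ 5 * X c ^ 2 * X d),
    perm_sum (fun a b c d => X a ^ 6 * X b ^ 4 * X c ^ 3 * X d),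
    bij_finset]
  simp (config := { decide := true }) only [Finset.sum_insert, Finset.sum_singleton,
    Finset.mem_insert, Finset.mem_singleton,
    Matrix.cons_val_zero, Matrix.cons_val_one, Matrix.cons_val_two, Matrix.cons_val_three,
    Matrix.head_cons, Matrix.tail_cons]
  linear_combination
    (X 0 * X 1 ^ 2 * X 2 ^ 5 * X 3 ^ 6 +
    X 0 * X 1 ^ 2 * X 2 ^ 6 * X 3 ^ 5 +
    X 0 * X 1 ^ 3 * X 2 ^ 3 * X 3 ^ 7 +
    4 * X 0 * X 1 ^ 3 * X 2 ^ 4 * X 3 ^ 6 +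
    7 * X 0 * X 1 ^ 3 * X 2 ^ 5 * X 3 ^ 5 +
    4 * X 0 * X 1 ^ 3 * X 2 ^ 6 * X 3 ^ 4 +
    X 0 * X 1 ^ 3 * X 2 ^ 7 * X 3 ^ 3 +
    4 * X 0 * X 1 ^ 4 * X 2 ^ 3 * X 3 ^ 6 +
    11 * X 0 * X 1 ^ 4 * X 2 ^ 4 * X 3 ^ 5 +
    11 * X 0 * X 1 ^ 4 * X 2 ^ 5 * X 3 ^ 4 +
    4 * X 0 * X 1 ^ 4 * X 2 ^ 6 * X 3 ^ 3 +
    X 0 * X 1 ^ 5 * X 2 ^ 2 * X 3 ^ 6 +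
    7 * X 0 * X 1 ^ 5 * X 2 ^ 3 * X 3 ^ 5 +
    11 * X 0 * X 1 ^ 5 * X 2 ^ 4 * X 3 ^ 4 +
    7 * X 0 * X 1 ^ 5 * X 2 ^ 5 * X 3 ^ 3 +
    X 0 * X 1 ^ 5 * X 2 ^ 6 * X 3 ^ 2 +
    X 0 * X 1 ^ 6 * X 2 ^ 2 * X 3 ^ 5 +
    4 * X 0 * X 1 ^ 6 * X 2 ^ 3 * X 3 ^ 4 +
    4 * X 0 * X 1 ^ 6 * X 2 ^ 4 * X 3 ^ 3 +
    X 0 * X 1 ^ 6 * X 2 ^ 5 * X 3 ^ 2 +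
    X 0 * X 1 ^ 7 * X 2 ^ 3 * X 3 ^ 3 +
    X 0 ^ 2 * X 1 * X 2 ^ 5 * X 3 ^ 6 +
    X 0 ^ 2 * X 1 * X 2 ^ 6 * X 3 ^ 5 +
    2 * X 0 ^ 2 * X 1 ^ 2 * X 2 ^ 3 * X 3 ^ 7 +
    9 * X 0 ^ 2 * X 1 ^ 2 * X 2 ^ 4 * X 3 ^ 6 +
    14 * X 0 ^ 2 * X 1 ^ 2 * X 2 ^ 5 * X 3 ^ 5 +
    9 * X 0 ^ 2 * X 1 ^ 2 * X 2 ^ 6 * X 3 ^ 4 +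
    2 * X 0 ^ 2 * X 1 ^ 2 * X 2 ^ 7 * X 3 ^ 3 +
    2 * X 0 ^ 2 * X 1 ^ 3 * X 2 ^ 2 * X 3 ^ 7 +
    15 * X 0 ^ 2 * X 1 ^ 3 * X 2 ^ 3 * X 3 ^ 6 +
    35 * X 0 ^ 2 * X 1 ^ 3 * X 2 ^ 4 * X 3 ^ 5 +
    35 * X 0 ^ 2 * X 1 ^ 3 * X 2 ^ 5 * X 3 ^ 4 +
    15 * X 0 ^ 2 * X 1 ^ 3 * X 2 ^ 6 * X 3 ^ 3 +
    2 * X 0 ^ 2 * X 1 ^ 3 * X 2 ^ 7 * X 3 ^ 2 +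
    9 * X 0 ^ 2 * X 1 ^ 4 * X 2 ^ 2 * X 3 ^ 6 +
    35 * X 0 ^ 2 * X 1 ^ 4 * X 2 ^ 3 * X 3 ^ 5 +
    54 * X 0 ^ 2 * X 1 ^ 4 * X 2 ^ 4 * X 3 ^ 4 +
    35 * X 0 ^ 2 * X 1 ^ 4 * X 2 ^ 5 * X 3 ^ 3 +
    9 * X 0 ^ 2 * X 1 ^ 4 * X 2 ^ 6 * X 3 ^ 2 +
    X 0 ^ 2 * X 1 ^ 5 * X 2 * X 3 ^ 6 +
    14 * X 0 ^ 2 * X 1 ^ 5 * X 2 ^ 2 * X 3 ^ 5 +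
    35 * X 0 ^ 2 * X 1 ^ 5 * X 2 ^ 3 * X 3 ^ 4 +
    35 * X 0 ^ 2 * X 1 ^ 5 * X 2 ^ 4 * X 3 ^ 3 +
    14 * X 0 ^ 2 * X 1 ^ 5 * X 2 ^ 5 * X 3 ^ 2 +
    X 0 ^ 2 * X 1 ^ 5 * X 2 ^ 6 * X 3 +
    X 0 ^ 2 * X 1 ^ 6 * X 2 * X 3 ^ 5 +
    9 * X 0 ^ 2 * X 1 ^ 6 * X 2 ^ 2 * X 3 ^ 4 +
    15 * X 0 ^ 2 * X 1 ^ 6 * X 2 ^ 3 * X 3 ^ 3 +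
    9 * X 0 ^ 2 * X 1 ^ 6 * X 2 ^ 4 * X 3 ^ 2 +
    X 0 ^ 2 * X 1 ^ 6 * X 2 ^ 5 * X 3 +
    2 * X 0 ^ 2 * X 1 ^ 7 * X 2 ^ 2 * X 3 ^ 3 +
    2 * X 0 ^ 2 * X 1 ^ 7 * X 2 ^ 3 * X 3 ^ 2 +
    X 0 ^ 3 * X 1 * X 2 ^ 3 * X 3 ^ 7 +
    4 * X 0 ^ 3 * X 1 * X 2 ^ 4 * X 3 ^ 6 +
    7 * X 0 ^ 3 * X 1 * X 2 ^ 5 * X 3 ^ 5 +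
    4 * X 0 ^ 3 * X 1 * X 2 ^ 6 * X 3 ^ 4 +
    X 0 ^ 3 * X 1 * X 2 ^ 7 * X 3 ^ 3 +
    2 * X 0 ^ 3 * X 1 ^ 2 * X 2 ^ 2 * X 3 ^ 7 +
    15 * X 0 ^ 3 * X 1 ^ 2 * X 2 ^ 3 * X 3 ^ 6 +
    35 * X 0 ^ 3 * X 1 ^ 2 * X 2 ^ 4 * X 3 ^ 5 +
    35 * X 0 ^ 3 * X 1 ^ 2 * X 2 ^ 5 * X 3 ^ 4 +
    15 * X 0 ^ 3 * X 1 ^ 2 * X 2 ^ 6 * X 3 ^ 3 +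
    2 * X 0 ^ 3 * X 1 ^ 2 * X 2 ^ 7 * X 3 ^ 2 +
    X 0 ^ 3 * X 1 ^ 3 * X 2 * X 3 ^ 7 +
    15 * X 0 ^ 3 * X 1 ^ 3 * X 2 ^ 2 * X 3 ^ 6 +
    57 * X 0 ^ 3 * X 1 ^ 3 * X 2 ^ 3 * X 3 ^ 5 +
    86 * X 0 ^ 3 * X 1 ^ 3 * X 2 ^ 4 * X 3 ^ 4 +
    57 * X 0 ^ 3 * X 1 ^ 3 * X 2 ^ 5 * X 3 ^ 3 +
    15 * X 0 ^ 3 * X 1 ^ 3 * X 2 ^ 6 * X 3 ^ 2 +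
    X 0 ^ 3 * X 1 ^ 3 * X 2 ^ 7 * X 3 +
    4 * X 0 ^ 3 * X 1 ^ 4 * X 2 * X 3 ^ 6 +
    35 * X 0 ^ 3 * X 1 ^ 4 * X 2 ^ 2 * X 3 ^ 5 +
    86 * X 0 ^ 3 * X 1 ^ 4 * X 2 ^ 3 * X 3 ^ 4 +
    86 * X 0 ^ 3 * X 1 ^ 4 * X 2 ^ 4 * X 3 ^ 3 +
    35 * X 0 ^ 3 * X 1 ^ 4 * X 2 ^ 5 * X 3 ^ 2 +
    4 * X 0 ^ 3 * X 1 ^ 4 * X 2 ^ 6 * X 3 +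
    7 * X 0 ^ 3 * X 1 ^ 5 * X 2 * X 3 ^ 5 +
    35 * X 0 ^ 3 * X 1 ^ 5 * X 2 ^ 2 * X 3 ^ 4 +
    57 * X 0 ^ 3 * X 1 ^ 5 * X 2 ^ 3 * X 3 ^ 3 +
    35 * X 0 ^ 3 * X 1 ^ 5 * X 2 ^ 4 * X 3 ^ 2 +
    7 * X 0 ^ 3 * X 1 ^ 5 * X 2 ^ 5 * X 3 +
    4 * X 0 ^ 3 * X 1 ^ 6 * X 2 * X 3 ^ 4 +
    15 * X 0 ^ 3 * X 1 ^ 6 * X 2 ^ 2 * X 3 ^ 3 +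
    15 * X 0 ^ 3 * X 1 ^ 6 * X 2 ^ 3 * X 3 ^ 2 +
    4 * X 0 ^ 3 * X 1 ^ 6 * X 2 ^ 4 * X 3 +
    X 0 ^ 3 * X 1 ^ 7 * X 2 * X 3 ^ 3 +
    2 * X 0 ^ 3 * X 1 ^ 7 * X 2 ^ 2 * X 3 ^ 2 +
    X 0 ^ 3 * X 1 ^ 7 * X 2 ^ 3 * X 3 +
    4 * X 0 ^ 4 * X 1 * X 2 ^ 3 * X 3 ^ 6 +
    11 * X 0 ^ 4 * X 1 * X 2 ^ 4 * X 3 ^ 5 +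
    11 * X 0 ^ 4 * X 1 * X 2 ^ 5 * X 3 ^ 4 +
    4 * X 0 ^ 4 * X 1 * X 2 ^ 6 * X 3 ^ 3 +
    9 * X 0 ^ 4 * X 1 ^ 2 * X 2 ^ 2 * X 3 ^ 6 +
    35 * X 0 ^ 4 * X 1 ^ 2 * X 2 ^ 3 * X 3 ^ 5 +
    54 * X 0 ^ 4 * X 1 ^ 2 * X 2 ^ 4 * X 3 ^ 4 +
    35 * X 0 ^ 4 * X 1 ^ 2 * X 2 ^ 5 * X 3 ^ 3 +
    9 * X 0 ^ 4 * X 1 ^ 2 * X 2 ^ 6 * X 3 ^ 2 +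
    4 * X 0 ^ 4 * X 1 ^ 3 * X 2 * X 3 ^ 6 +
    35 * X 0 ^ 4 * X 1 ^ 3 * X 2 ^ 2 * X 3 ^ 5 +
    86 * X 0 ^ 4 * X 1 ^ 3 * X 2 ^ 3 * X 3 ^ 4 +
    86 * X 0 ^ 4 * X 1 ^ 3 * X 2 ^ 4 * X 3 ^ 3 +
    35 * X 0 ^ 4 * X 1 ^ 3 * X 2 ^ 5 * X 3 ^ 2 +
    4 * X 0 ^ 4 * X 1 ^ 3 * X 2 ^ 6 * X 3 +
    11 * X 0 ^ 4 * X 1 ^ 4 * X 2 * X 3 ^ 5 +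
    54 * X 0 ^ 4 * X 1 ^ 4 * X 2 ^ 2 * X 3 ^ 4 +
    86 * X 0 ^ 4 * X 1 ^ 4 * X 2 ^ 3 * X 3 ^ 3 +
    54 * X 0 ^ 4 * X 1 ^ 4 * X 2 ^ 4 * X 3 ^ 2 +
    11 * X 0 ^ 4 * X 1 ^ 4 * X 2 ^ 5 * X 3 +
    11 * X 0 ^ 4 * X 1 ^ 5 * X 2 * X 3 ^ 4 +
    35 * X 0 ^ 4 * X 1 ^ 5 * X 2 ^ 2 * X 3 ^ 3 +
    35 * X 0 ^ 4 * X 1 ^ 5 * X 2 ^ 3 * X 3 ^ 2 +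
    11 * X 0 ^ 4 * X 1 ^ 5 * X 2 ^ 4 * X 3 +
    4 * X 0 ^ 4 * X 1 ^ 6 * X 2 * X 3 ^ 3 +
    9 * X 0 ^ 4 * X 1 ^ 6 * X 2 ^ 2 * X 3 ^ 2 +
    4 * X 0 ^ 4 * X 1 ^ 6 * X 2 ^ 3 * X 3 +
    X 0 ^ 5 * X 1 * X 2 ^ 2 * X 3 ^ 6 +
    7 * X 0 ^ 5 * X 1 * X 2 ^ 3 * X 3 ^ 5 +
    11 * X 0 ^ 5 * X 1 * X 2 ^ 4 * X 3 ^ 4 +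
    7 * X 0 ^ 5 * X 1 * X 2 ^ 5 * X 3 ^ 3 +
    X 0 ^ 5 * X 1 * X 2 ^ 6 * X 3 ^ 2 +
    X 0 ^ 5 * X 1 ^ 2 * X 2 * X 3 ^ 6 +
    14 * X 0 ^ 5 * X 1 ^ 2 * X 2 ^ 2 * X 3 ^ 5 +
    35 * X 0 ^ 5 * X 1 ^ 2 * X 2 ^ 3 * X 3 ^ 4 +
    35 * X 0 ^ 5 * X 1 ^ 2 * X 2 ^ 4 * X 3 ^ 3 +
    14 * X 0 ^ 5 * X 1 ^ 2 * X 2 ^ 5 * X 3 ^ 2 +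
    X 0 ^ 5 * X 1 ^ 2 * X 2 ^ 6 * X 3 +
    7 * X 0 ^ 5 * X 1 ^ 3 * X 2 * X 3 ^ 5 +
    35 * X 0 ^ 5 * X 1 ^ 3 * X 2 ^ 2 * X 3 ^ 4 +
    57 * X 0 ^ 5 * X 1 ^ 3 * X 2 ^ 3 * X 3 ^ 3 +
    35 * X 0 ^ 5 * X 1 ^ 3 * X 2 ^ 4 * X 3 ^ 2 +
    7 * X 0 ^ 5 * X 1 ^ 3 * X 2 ^ 5 * X 3 +
    11 * X 0 ^ 5 * X 1 ^ 4 * X 2 * X 3 ^ 4 +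
    35 * X 0 ^ 5 * X 1 ^ 4 * X 2 ^ 2 * X 3 ^ 3 +
    35 * X 0 ^ 5 * X 1 ^ 4 * X 2 ^ 3 * X 3 ^ 2 +
    11 * X 0 ^ 5 * X 1 ^ 4 * X 2 ^ 4 * X 3 +
    7 * X 0 ^ 5 * X 1 ^ 5 * X 2 * X 3 ^ 3 +
    14 * X 0 ^ 5 * X 1 ^ 5 * X 2 ^ 2 * X 3 ^ 2 +
    7 * X 0 ^ 5 * X 1 ^ 5 * X 2 ^ 3 * X 3 +
    X 0 ^ 5 * X 1 ^ 6 * X 2 * X 3 ^ 2 +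
    X 0 ^ 5 * X 1 ^ 6 * X 2 ^ 2 * X 3 +
    X 0 ^ 6 * X 1 * X 2 ^ 2 * X 3 ^ 5 +
    4 * X 0 ^ 6 * X 1 * X 2 ^ 3 * X 3 ^ 4 +
    4 * X 0 ^ 6 * X 1 * X 2 ^ 4 * X 3 ^ 3 +
    X 0 ^ 6 * X 1 * X 2 ^ 5 * X 3 ^ 2 +
    X 0 ^ 6 * X 1 ^ 2 * X 2 * X 3 ^ 5 +
    9 * X 0 ^ 6 * X 1 ^ 2 * X 2 ^ 2 * X 3 ^ 4 +
    15 * X 0 ^ 6 * X 1 ^ 2 * X 2 ^ 3 * X 3 ^ 3 +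
    9 * X 0 ^ 6 * X 1 ^ 2 * X 2 ^ 4 * X 3 ^ 2 +
    X 0 ^ 6 * X 1 ^ 2 * X 2 ^ 5 * X 3 +
    4 * X 0 ^ 6 * X 1 ^ 3 * X 2 * X 3 ^ 4 +
    15 * X 0 ^ 6 * X 1 ^ 3 * X 2 ^ 2 * X 3 ^ 3 +
    15 * X 0 ^ 6 * X 1 ^ 3 * X 2 ^ 3 * X 3 ^ 2 +
    4 * X 0 ^ 6 * X 1 ^ 3 * X 2 ^ 4 * X 3 +
    4 * X 0 ^ 6 * X 1 ^ 4 * X 2 * X 3 ^ 3 +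
    9 * X 0 ^ 6 * X 1 ^ 4 * X 2 ^ 2 * X 3 ^ 2 +
    4 * X 0 ^ 6 * X 1 ^ 4 * X 2 ^ 3 * X 3 +
    X 0 ^ 6 * X 1 ^ 5 * X 2 * X 3 ^ 2 +
    X 0 ^ 6 * X 1 ^ 5 * X 2 ^ 2 * X 3 +
    X 0 ^ 7 * X 1 * X 2 ^ 3 * X 3 ^ 3 +
    2 * X 0 ^ 7 * X 1 ^ 2 * X 2 ^ 2 * X 3 ^ 3 +
    2 * X 0 ^ 7 * X 1 ^ 2 * X 2 ^ 3 * X 3 ^ 2 +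
    X 0 ^ 7 * X 1 ^ 3 * X 2 * X 3 ^ 3 +
    2 * X 0 ^ 7 * X 1 ^ 3 * X 2 ^ 2 * X 3 ^ 2 +
    X 0 ^ 7 * X 1 ^ 3 * X 2 ^ 3 * X 3) * h2
end
end
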